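/- Let p̃(s,x;T,v) be the transition density of the d-dimensional linear SDE dX̃_t = (B̃(t)X̃_t + β̃(t))dt + σ̃(t)dW_t, where B̃, β̃ are continuously differentiable, σ̃ is Lipschitz, and ã = σ̃σ̃' is uniformly elliptic on [0,T]. Then there exist constants C, Λ > 0 such that p̃(s,x;T,v) ≤ C(T-s)^{-d/2} exp(-Λ‖v-x‖²/(T-s)) for all s ∈ [0,T) and all x ∈ ℝ^d. -/

import Mathlib

open Matrix Real intervalIntegral

attribute [local instance] Matrix.normedAddCommGroup Matrix.normedSpace

section auxStmt7
open MeasureTheory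
variable {d : ℕ}

lemma dot_sub_le_stmt7 (p q : Fin d → ℝ) :
    (p - q) ⬝ᵥ (p - q) ≤ 2 * (p ⬝ᵥ p) + 2 * (q ⬝ᵥ q) := by
  simp only [dotProduct, Pi.sub_apply, Finset.mul_sum, ← Finset.sum_add_distrib]
  exact Finset.sum_le_sum fun i _ => by nlinarith [sq_nonneg (p i + q i)]

lemma dot_add_ge_stmt7 (p q : Fin d → ℝ) :
    (1/2) * (p ⬝ᵥ p) - (q ⬝ᵥ q) ≤ (p + q) ⬝ᵥ (p + q) := by
  have h : ∀ i, (1/2) * (p i * p i) - q i * q i ≤ (p i + q i) * (p i + q i) :=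
    fun i => by nlinarith [sq_nonneg (p i + 2 * q i)]
  simp only [dotProduct, Pi.add_apply, Finset.mul_sum]
  rw [← Finset.sum_sub_distrib]
  exact Finset.sum_le_sum fun i _ => h i


lemma dot_nonneg (x : Fin d → ℝ) : 0 ≤ x ⬝ᵥ x :=
  Finset.sum_nonneg fun i _ => mul_self_nonneg _

lemma dot_sq_le (x y : Fin d → ℝ) : (x ⬝ᵥ y)^2 ≤ (x ⬝ᵥ x) * (y ⬝ᵥ y) := by
  simpa [dotProduct, sq] using Finset.sum_mul_sq_le_sq_mul_sq Finset.univ x y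

lemma sum_sq_eq_dot (x : Fin d → ℝ) : ∑ j, x j ^ 2 = x ⬝ᵥ x := by
  simp [dotProduct, sq]

lemma mulVec_dot_le (A : Matrix (Fin d) (Fin d) ℝ) {c : ℝ} (hc0 : 0 ≤ c)
    (hc : ∀ i j, |A i j| ≤ c) (w : Fin d → ℝ) :
    (A *ᵥ w) ⬝ᵥ (A *ᵥ w) ≤ ((d:ℝ)^2 * c^2) * (w ⬝ᵥ w) := by
  have hrow : ∀ i : Fin d, (A *ᵥ w) i ^ 2 ≤ ((d:ℝ) * c^2) * (w ⬝ᵥ w) := by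
    intro i
    have h2 := Finset.sum_mul_sq_le_sq_mul_sq Finset.univ (fun j => A i j) w
    have h3 : (∑ j, A i j ^ 2) ≤ (d:ℝ) * c^2 := by
      calc (∑ j : Fin d, A i j ^ 2) ≤ ∑ _j : Fin d, c^2 := by
            refine Finset.sum_le_sum fun j _ => sq_le_sq' ?_ (abs_le.1 (hc i j)).2
            linarith [(abs_le.1 (hc i j)).1]
        _ = (d:ℝ) * c^2 := by simp [Finset.sum_const, Fintype.card_fin, mul_comm]
    calc (A *ᵥ w) i ^2 = (∑ j, A i j * w j)^2 := rfl
      _ ≤ (∑ j, A i j ^2) * (∑ j, w j^2) := h2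
      _ ≤ ((d:ℝ)*c^2) * (w ⬝ᵥ w) := by
          rw [← sum_sq_eq_dot w]
          exact mul_le_mul_of_nonneg_right h3 (Finset.sum_nonneg fun j _ => sq_nonneg _)
  calc (A *ᵥ w) ⬝ᵥ (A *ᵥ w) = ∑ i, (A *ᵥ w) i ^ 2 := (sum_sq_eq_dot _).symm
    _ ≤ ∑ _i : Fin d, ((d:ℝ) * c^2) * (w ⬝ᵥ w) := Finset.sum_le_sum fun i _ => hrow i
    _ = ((d:ℝ)^2 * c^2) * (w ⬝ᵥ w) := by
        simp [Finset.sum_const, Fintype.card_fin]; ring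

lemma abs_quad_le (B : Matrix (Fin d) (Fin d) ℝ) {c : ℝ} (hc0 : 0 ≤ c)
    (hc : ∀ i j, |B i j| ≤ c) (z : Fin d → ℝ) :
    |z ⬝ᵥ (B *ᵥ z)| ≤ (d:ℝ) * c * (z ⬝ᵥ z) := by
  have h1 : |z ⬝ᵥ (B *ᵥ z)| ≤ ∑ i, |z i| * (c * ∑ j, |z j|) := by
    refine (Finset.abs_sum_le_sum_abs _ _).trans (Finset.sum_le_sum fun i _ => ?_)
    rw [abs_mul]
    refine mul_le_mul_of_nonneg_left ?_ (abs_nonneg (z i))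
    show |∑ j, B i j * z j| ≤ _
    refine (Finset.abs_sum_le_sum_abs (fun j => B i j * z j) Finset.univ).trans ?_
    rw [Finset.mul_sum]
    refine Finset.sum_le_sum fun j _ => ?_
    rw [abs_mul]
    exact mul_le_mul_of_nonneg_right (hc i j) (abs_nonneg _)
  have h2 : ∑ i, |z i| * (c * ∑ j, |z j|) = c * (∑ i, |z i|)^2 := by
    rw [← Finset.sum_mul]; ring
  have h3 : (∑ i, |z i|)^2 ≤ (d:ℝ) * (z ⬝ᵥ z) := by
    have := Finset.sum_mul_sq_le_sq_mul_sq Finset.univ (fun _ : Fin d => (1:ℝ)) (fun i => |z i|)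
    simpa [Finset.sum_const, Fintype.card_fin, sq_abs, sum_sq_eq_dot] using this
  calc |z ⬝ᵥ (B *ᵥ z)| ≤ c * (∑ i, |z i|)^2 := by rw [← h2]; exact h1
    _ ≤ c * ((d:ℝ) * (z ⬝ᵥ z)) := mul_le_mul_of_nonneg_left h3 hc0
    _ = (d:ℝ) * c * (z ⬝ᵥ z) := by ring


noncomputable def quadCLM (y : Fin d → ℝ) : Matrix (Fin d) (Fin d) ℝ →L[ℝ] ℝ :=
  LinearMap.toContinuousLinearMap
    { toFun := fun M => y ⬝ᵥ (M *ᵥ y)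
      map_add' := fun M N => by simp [Matrix.add_mulVec, dotProduct_add]
      map_smul' := fun c M => by simp [Matrix.smul_mulVec, dotProduct_smul] }

@[simp] lemma quadCLM_apply (y : Fin d → ℝ) (M : Matrix (Fin d) (Fin d) ℝ) :
    quadCLM y M = y ⬝ᵥ (M *ᵥ y) := rfl

noncomputable def transCLM : Matrix (Fin d) (Fin d) ℝ →L[ℝ] Matrix (Fin d) (Fin d) ℝ :=
  LinearMap.toContinuousLinearMap
    { toFun := fun M => Mᵀ
      map_add' := fun M N => Matrix.transpose_add M N
      map_smul' := fun c M => Matrix.transpose_smul c M }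

lemma intervalIntegrable_clm_comp {E F : Type*} [NormedAddCommGroup E] [NormedSpace ℝ E]
    [NormedAddCommGroup F] [NormedSpace ℝ F] (L : E →L[ℝ] F) {f : ℝ → E} {a b : ℝ}
    (h : IntervalIntegrable f volume a b) : IntervalIntegrable (fun t => L (f t)) volume a b :=
  ⟨L.integrable_comp h.1, L.integrable_comp h.2⟩

lemma quad_integral {F : ℝ → Matrix (Fin d) (Fin d) ℝ} {a b : ℝ}
    (h : @IntervalIntegrable _ _ NormedAddGroup.toENormedAddMonoid F volume a b) (y : Fin d → ℝ) :
    y ⬝ᵥ ((∫ τ in a..b, F τ) *ᵥ y) = ∫ τ in a..b, y ⬝ᵥ (F τ *ᵥ y) := by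
  have := (quadCLM y).intervalIntegral_comp_comm h
  exact this.symm

lemma transpose_integral {F : ℝ → Matrix (Fin d) (Fin d) ℝ} {a b : ℝ}
    (h : @IntervalIntegrable _ _ NormedAddGroup.toENormedAddMonoid F volume a b) :
    (∫ τ in a..b, F τ)ᵀ = ∫ τ in a..b, (F τ)ᵀ := by
  have := (transCLM (d := d)).intervalIntegral_comp_comm h
  exact this.symm


lemma dot_nonneg' (x : Fin d → ℝ) : 0 ≤ x ⬝ᵥ x :=
  Finset.sum_nonneg fun i _ => mul_self_nonneg _

-- symmetric quadratic form Cauchy-Schwarz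
lemma form_cs {K : Matrix (Fin d) (Fin d) ℝ} (hsym : Kᵀ = K)
    (hpsd : ∀ y : Fin d → ℝ, 0 ≤ y ⬝ᵥ (K *ᵥ y)) (x y : Fin d → ℝ) :
    (x ⬝ᵥ (K *ᵥ y))^2 ≤ (x ⬝ᵥ (K *ᵥ x)) * (y ⬝ᵥ (K *ᵥ y)) := by
  have hKs : ∀ a b : Fin d, K a b = K b a := by
    intro a b
    conv_lhs => rw [← hsym]
    exact Matrix.transpose_apply K a b
  have hs : ∀ u w : Fin d → ℝ, u ⬝ᵥ (K *ᵥ w) = w ⬝ᵥ (K *ᵥ u) := by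
    intro u w
    simp only [dotProduct, Matrix.mulVec, Finset.mul_sum]
    rw [Finset.sum_comm]
    refine Finset.sum_congr rfl fun i _ => Finset.sum_congr rfl fun j _ => ?_
    rw [hKs j i]
    ring
  have key : ∀ t : ℝ, 0 ≤ (y ⬝ᵥ (K *ᵥ y)) * (t * t) + (2 * (x ⬝ᵥ (K *ᵥ y))) * t
      + (x ⬝ᵥ (K *ᵥ x)) := by
    intro t
    have h0 := hpsd (x + t • y)
    have hexp : (x + t • y) ⬝ᵥ (K *ᵥ (x + t • y)) =
        (y ⬝ᵥ (K *ᵥ y)) * (t * t) + (2 * (x ⬝ᵥ (K *ᵥ y))) * t + (x ⬝ᵥ (K *ᵥ x)) := by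
      rw [Matrix.mulVec_add, Matrix.mulVec_smul]
      rw [add_dotProduct, smul_dotProduct]
      rw [dotProduct_add, dotProduct_add, dotProduct_smul,
        dotProduct_smul]
      have := hs y x
      simp only [smul_eq_mul]
      rw [this]
      ring
    rw [hexp] at h0
    exact h0
  have hd := discrim_le_zero key
  unfold discrim at hd
  nlinarith [hd]

lemma isHermitian_of_symm {K : Matrix (Fin d) (Fin d) ℝ} (hsym : Kᵀ = K) : K.IsHermitian := by
  rw [Matrix.IsHermitian, Matrix.conjTranspose_eq_transpose_of_trivial]
  exact hsym

lemma det_ge_of_quad {K : Matrix (Fin d) (Fin d) ℝ} (hsym : Kᵀ = K) {m : ℝ} (hm : 0 ≤ m)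
    (hlow : ∀ y : Fin d → ℝ, m * (y ⬝ᵥ y) ≤ y ⬝ᵥ (K *ᵥ y)) : m ^ d ≤ K.det := by
  have hherm : K.IsHermitian := isHermitian_of_symm hsym
  have hev : ∀ i, m ≤ hherm.eigenvalues i := by
    intro i
    have hu := hherm.mulVec_eigenvectorBasis i
    set u : Fin d → ℝ := ⇑(hherm.eigenvectorBasis i) with hudef
    have hnorm1 : u ⬝ᵥ u = 1 := by
      have h1 : ‖hherm.eigenvectorBasis i‖ = 1 := hherm.eigenvectorBasis.orthonormal.1 i
      rw [EuclideanSpace.norm_eq] at h1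
      have h4 : (∑ j, ‖hherm.eigenvectorBasis i j‖ ^ 2) = 1 := Real.sqrt_eq_one.mp h1
      have h5 : u ⬝ᵥ u = ∑ j, ‖hherm.eigenvectorBasis i j‖ ^ 2 := by
        simp only [dotProduct, Real.norm_eq_abs, sq]
        refine Finset.sum_congr rfl fun j _ => ?_
        rw [abs_mul_abs_self]
      rw [h5, h4]
    have hq := hlow u
    rw [hu] at hq
    have : u ⬝ᵥ (hherm.eigenvalues i • u) = hherm.eigenvalues i := by
      rw [dotProduct_smul, hnorm1]; simp
    rw [this, hnorm1, mul_one] at hq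
    exact hq
  have hdet : K.det = ∏ i, hherm.eigenvalues i := by
    simpa using hherm.det_eq_prod_eigenvalues
  rw [hdet]
  calc m ^ d = ∏ _i : Fin d, m := by simp [Finset.prod_const, Fintype.card_fin]
    _ ≤ ∏ i, hherm.eigenvalues i :=
        Finset.prod_le_prod (fun i _ => hm) (fun i _ => hev i)

lemma inv_quad_ge {K : Matrix (Fin d) (Fin d) ℝ} (hsym : Kᵀ = K) {m M : ℝ} (hm : 0 < m)
    (hM : 0 < M) (hdet : IsUnit K.det)
    (hlow : ∀ y : Fin d → ℝ, m * (y ⬝ᵥ y) ≤ y ⬝ᵥ (K *ᵥ y))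
    (hup : ∀ y : Fin d → ℝ, y ⬝ᵥ (K *ᵥ y) ≤ M * (y ⬝ᵥ y)) (e : Fin d → ℝ) :
    (e ⬝ᵥ e) / M ≤ e ⬝ᵥ (K⁻¹ *ᵥ e) := by
  by_cases he : e = 0
  · simp [he, Matrix.mulVec_zero]
  have hee : 0 < e ⬝ᵥ e := by
    rcases lt_or_eq_of_le (dot_nonneg' e) with h | h
    · exact h
    · exact absurd (dotProduct_self_eq_zero.mp h.symm) he
  set u := K⁻¹ *ᵥ e with hu
  have hKu : K *ᵥ u = e := by
    rw [hu, Matrix.mulVec_mulVec, Matrix.mul_nonsing_inv _ hdet, Matrix.one_mulVec]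
  have hpsd : ∀ y : Fin d → ℝ, 0 ≤ y ⬝ᵥ (K *ᵥ y) :=
    fun y => le_trans (mul_nonneg hm.le (dot_nonneg' y)) (hlow y)
  have hcs := form_cs hsym hpsd e u
  rw [hKu] at hcs
  have hEe : e ⬝ᵥ (K *ᵥ e) ≤ M * (e ⬝ᵥ e) := hup e
  have hu0 : 0 ≤ u ⬝ᵥ e := by
    have h := hpsd u; rwa [hKu] at h
  have h1 : (e ⬝ᵥ e)^2 ≤ M * (e ⬝ᵥ e) * (u ⬝ᵥ e) :=
    hcs.trans (mul_le_mul_of_nonneg_right hEe hu0)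
  have hgoal : e ⬝ᵥ e ≤ M * (u ⬝ᵥ e) := by nlinarith [hee]
  rw [div_le_iff₀ hM]
  have hco : e ⬝ᵥ u = u ⬝ᵥ e := dotProduct_comm e u
  rw [hco]
  linarith
  
-- entry bound from quadratic upper bound on columns
lemma entry_le_of_quad {A : Matrix (Fin d) (Fin d) ℝ} {c : ℝ}
    (h : ∀ y : Fin d → ℝ, (A *ᵥ y) ⬝ᵥ (A *ᵥ y) ≤ c * (y ⬝ᵥ y)) (i j : Fin d) :
    |A i j| ≤ Real.sqrt c := by
  classical
  have hy := h (Pi.single j 1)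
  have hcol : A *ᵥ Pi.single j 1 = fun i => A i j := by
    ext k
    simp [Matrix.mulVec_single]
  have hyy : (Pi.single j 1 : Fin d → ℝ) ⬝ᵥ (Pi.single j 1) = 1 := by
    simp [dotProduct_single]
  rw [hcol, hyy, mul_one] at hy
  have hsq : A i j ^ 2 ≤ c := by
    have : A i j ^2 ≤ (fun i => A i j) ⬝ᵥ (fun i => A i j) := by
      rw [dotProduct]
      have : A i j ^ 2 = A i j * A i j := sq (A i j) ▸ by ring
      rw [this]
      exact Finset.single_le_sum (f := fun k => A k j * A k j)
        (fun k _ => mul_self_nonneg _) (Finset.mem_univ i)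
    exact this.trans hy
  exact Real.abs_le_sqrt hsq


noncomputable def mulVecCLM (y : Fin d → ℝ) : Matrix (Fin d) (Fin d) ℝ →L[ℝ] (Fin d → ℝ) :=
  LinearMap.toContinuousLinearMap
    { toFun := fun M => M *ᵥ y
      map_add' := fun M N => Matrix.add_mulVec M N y
      map_smul' := fun c M => Matrix.smul_mulVec c M y }

@[simp] lemma mulVecCLM_apply (y : Fin d → ℝ) (M : Matrix (Fin d) (Fin d) ℝ) :
    mulVecCLM y M = M *ᵥ y := rfl

lemma flow_bound (B : ℝ → Matrix (Fin d) (Fin d) ℝ) (Φf : ℝ → Matrix (Fin d) (Fin d) ℝ)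
    (hderiv : ∀ t, HasDerivAt Φf (B t * Φf t) t)
    {s T κ : ℝ} (hκ0 : 0 ≤ κ) (hs0 : 0 ≤ s) (hsT : s ≤ T)
    (hq : ∀ t ∈ Set.Icc s T, ∀ z : Fin d → ℝ, |z ⬝ᵥ (B t *ᵥ z)| ≤ (κ/2) * (z ⬝ᵥ z))
    (y : Fin d → ℝ) : ∀ r ∈ Set.Icc s T,
      Real.exp (-(κ * T)) * ((Φf s *ᵥ y) ⬝ᵥ (Φf s *ᵥ y)) ≤ (Φf r *ᵥ y) ⬝ᵥ (Φf r *ᵥ y) ∧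
      (Φf r *ᵥ y) ⬝ᵥ (Φf r *ᵥ y) ≤ Real.exp (κ * T) * ((Φf s *ᵥ y) ⬝ᵥ (Φf s *ᵥ y)) := by
  set z : ℝ → Fin d → ℝ := fun r => Φf r *ᵥ y with hzdef
  have hz : ∀ t, HasDerivAt z (B t *ᵥ z t) t := by
    intro t
    have h1 : HasDerivAt (fun r => mulVecCLM y (Φf r)) (mulVecCLM y (B t * Φf t)) t :=
      (mulVecCLM y).hasFDerivAt.comp_hasDerivAt t (hderiv t)
    simpa [hzdef, Matrix.mulVec_mulVec] using h1
  set g : ℝ → ℝ := fun r => z r ⬝ᵥ z r with hgdef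
  have hg : ∀ t, HasDerivAt g (2 * (z t ⬝ᵥ (B t *ᵥ z t))) t := by
    intro t
    have h1 : ∀ i : Fin d, HasDerivAt (fun r => z r i) ((B t *ᵥ z t) i) t :=
      fun i => hasDerivAt_pi.mp (hz t) i
    have h2 : HasDerivAt (fun r => ∑ i, z r i * z r i)
        (∑ i, ((B t *ᵥ z t) i * z t i + z t i * (B t *ᵥ z t) i)) t :=
      HasDerivAt.fun_sum fun i _ => (h1 i).mul (h1 i)
    have h3 : (∑ i, ((B t *ᵥ z t) i * z t i + z t i * (B t *ᵥ z t) i))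
        = 2 * (z t ⬝ᵥ (B t *ᵥ z t)) := by
      rw [dotProduct, Finset.mul_sum]
      exact Finset.sum_congr rfl fun i _ => by ring
    rw [← h3]
    exact h2
  have hgnn : ∀ r, 0 ≤ g r := fun r => Finset.sum_nonneg fun i _ => mul_self_nonneg _
  have hgb : ∀ t ∈ Set.Icc s T, |2 * (z t ⬝ᵥ (B t *ᵥ z t))| ≤ κ * g t := by
    intro t ht
    rw [abs_mul, abs_two]
    have := hq t ht (z t)
    calc 2 * |z t ⬝ᵥ (B t *ᵥ z t)| ≤ 2 * ((κ/2) * (z t ⬝ᵥ z t)) := by linarith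
      _ = κ * g t := by rw [hgdef]; ring
  -- upper bound : r ↦ exp(-(κ r)) * g r is antitone on [s,T]
  have hup : AntitoneOn (fun r => Real.exp (-(κ * r)) * g r) (Set.Icc s T) := by
    have hdiff : ∀ r : ℝ, HasDerivAt (fun r => Real.exp (-(κ * r)) * g r)
        (Real.exp (-(κ * r)) * (2 * (z r ⬝ᵥ (B r *ᵥ z r)) - κ * g r)) r := by
      intro r
      have he : HasDerivAt (fun r : ℝ => Real.exp (-(κ * r))) (Real.exp (-(κ * r)) * (-κ)) r := by
        have hlin : HasDerivAt (fun r : ℝ => -(κ * r)) (-κ) r := by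
          simpa using ((hasDerivAt_id r).const_mul (-κ))
        simpa using hlin.exp
      have := he.mul (hg r)
      exact this.congr_deriv (by ring)
    apply antitoneOn_of_deriv_nonpos (convex_Icc s T)
    · exact fun x _ => ((hdiff x).differentiableAt).continuousAt.continuousWithinAt
    · intro x _
      exact ((hdiff x).differentiableAt).differentiableWithinAt
    · intro x hx
      rw [interior_Icc] at hx
      rw [(hdiff x).deriv]
      have hb := hgb x ⟨hx.1.le, hx.2.le⟩
      have h1 : 2 * (z x ⬝ᵥ (B x *ᵥ z x)) ≤ κ * g x := le_of_abs_le hb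
      have : (2 * (z x ⬝ᵥ (B x *ᵥ z x)) - κ * g x) ≤ 0 := by linarith
      exact mul_nonpos_of_nonneg_of_nonpos (Real.exp_nonneg _) this
  have hlo : MonotoneOn (fun r => Real.exp (κ * r) * g r) (Set.Icc s T) := by
    have hdiff : ∀ r : ℝ, HasDerivAt (fun r => Real.exp (κ * r) * g r)
        (Real.exp (κ * r) * (2 * (z r ⬝ᵥ (B r *ᵥ z r)) + κ * g r)) r := by
      intro r
      have he : HasDerivAt (fun r : ℝ => Real.exp (κ * r)) (Real.exp (κ * r) * κ) r := by
        have hlin : HasDerivAt (fun r : ℝ => κ * r) κ r := by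
          simpa using ((hasDerivAt_id r).const_mul κ)
        simpa using hlin.exp
      have := he.mul (hg r)
      exact this.congr_deriv (by ring)
    apply monotoneOn_of_deriv_nonneg (convex_Icc s T)
    · exact fun x _ => ((hdiff x).differentiableAt).continuousAt.continuousWithinAt
    · intro x _
      exact ((hdiff x).differentiableAt).differentiableWithinAt
    · intro x hx
      rw [interior_Icc] at hx
      rw [(hdiff x).deriv]
      have hb := hgb x ⟨hx.1.le, hx.2.le⟩
      have h1 : -(κ * g x) ≤ 2 * (z x ⬝ᵥ (B x *ᵥ z x)) := neg_le_of_abs_le hb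
      have : 0 ≤ (2 * (z x ⬝ᵥ (B x *ᵥ z x)) + κ * g x) := by linarith
      exact mul_nonneg (Real.exp_nonneg _) this
  intro r hr
  have hsmem : s ∈ Set.Icc s T := ⟨le_refl s, hsT⟩
  have hdiffT : κ * r - κ * s ≤ κ * T := by nlinarith [hr.1, hr.2, hs0]
  constructor
  · have h1 := hlo hsmem hr hr.1
    -- exp(κ s) g s ≤ exp(κ r) g r
    have h2 : Real.exp (-(κ * r)) * (Real.exp (κ * s) * g s)
        ≤ Real.exp (-(κ * r)) * (Real.exp (κ * r) * g r) :=
      mul_le_mul_of_nonneg_left h1 (Real.exp_nonneg _)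
    have h3 : Real.exp (-(κ * r)) * (Real.exp (κ * r) * g r) = g r := by
      rw [← mul_assoc, ← Real.exp_add]; simp
    have h4 : Real.exp (-(κ * r)) * (Real.exp (κ * s) * g s)
        = Real.exp (κ * s - κ * r) * g s := by
      rw [← mul_assoc, ← Real.exp_add]; ring_nf
    rw [h3, h4] at h2
    refine le_trans ?_ h2
    apply mul_le_mul_of_nonneg_right _ (hgnn s)
    apply Real.exp_le_exp.mpr
    nlinarith [hr.1, hr.2, hs0, hκ0]
  · have h1 := hup hsmem hr hr.1
    -- exp(-(κ r)) g r ≤ exp(-(κ s)) g s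
    have h2 : Real.exp (κ * r) * (Real.exp (-(κ * r)) * g r)
        ≤ Real.exp (κ * r) * (Real.exp (-(κ * s)) * g s) :=
      mul_le_mul_of_nonneg_left h1 (Real.exp_nonneg _)
    have h3 : Real.exp (κ * r) * (Real.exp (-(κ * r)) * g r) = g r := by
      rw [← mul_assoc, ← Real.exp_add]; simp
    have h4 : Real.exp (κ * r) * (Real.exp (-(κ * s)) * g s)
        = Real.exp (κ * r - κ * s) * g s := by
      rw [← mul_assoc, ← Real.exp_add]; ring_nf
    rw [h3, h4] at h2
    refine h2.trans ?_
    exact mul_le_mul_of_nonneg_right (Real.exp_le_exp.mpr hdiffT) (hgnn s)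
end auxStmt7

set_option maxHeartbeats 1000000 in
/-- Lemma 5.4: Gaussian-type upper bound for the transition density of the
linear SDE `dX̃ = (B̃(t)X̃ + β̃(t))dt + σ̃(t)dW_t`:
`p̃(s,x;T,v) ≤ C (T-s)^{-d/2} exp(-Λ ‖v-x‖²/(T-s))`. -/
theorem stmt_7 {d : ℕ} (hd : 1 ≤ d) (T : ℝ) (hT : 0 < T) (v : Fin d → ℝ)
    (Btil : ℝ → Matrix (Fin d) (Fin d) ℝ) (βtil : ℝ → Fin d → ℝ)
    (σtil : ℝ → Matrix (Fin d) (Fin d) ℝ)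
    (hB : ContDiffOn ℝ 1 Btil (Set.Icc 0 T))
    (hβ : ContDiffOn ℝ 1 βtil (Set.Icc 0 T))
    (Lσ : NNReal) (hσ : LipschitzOnWith Lσ σtil (Set.Icc 0 T))
    (atil : ℝ → Matrix (Fin d) (Fin d) ℝ)
    (hatil : ∀ s, atil s = σtil s * (σtil s)ᵀ)
    (η : ℝ) (hη : 0 < η)
    (hell : ∀ s ∈ Set.Icc (0 : ℝ) T, ∀ y : Fin d → ℝ,
      η * (y ⬝ᵥ y) ≤ y ⬝ᵥ (atil s *ᵥ y))
    -- `Φ` is the fundamental matrix of the linear ODE `x' = B̃(t)x`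
    (Φ : ℝ → ℝ → Matrix (Fin d) (Fin d) ℝ)
    (hΦid : ∀ s, Φ s s = 1)
    (hΦderiv : ∀ t s : ℝ, HasDerivAt (fun r => Φ r s) (Btil t * Φ t s) t)
    -- mean and covariance of the conditioned Gaussian law
    (μ : ℝ → (Fin d → ℝ) → Fin d → ℝ) (K : ℝ → Matrix (Fin d) (Fin d) ℝ)
    (hμ : ∀ s x, μ s x = Φ T s *ᵥ x + ∫ τ in s..T, Φ T τ *ᵥ βtil τ)
    (hK : ∀ s, K s = ∫ τ in s..T, Φ T τ * atil τ * (Φ T τ)ᵀ)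
    -- the transition density `p̃(s, x) = p̃(s, x; T, v)`
    (ptil : ℝ → (Fin d → ℝ) → ℝ)
    (hptil : ∀ s x, ptil s x =
      (2 * π) ^ (-(d : ℝ) / 2) * (K s).det ^ (-(1 : ℝ) / 2) *
        Real.exp (-(1 / 2) * ((v - μ s x) ⬝ᵥ ((K s)⁻¹ *ᵥ (v - μ s x))))) :
    ∃ C > (0 : ℝ), ∃ Λ > (0 : ℝ), ∀ s ∈ Set.Ico (0 : ℝ) T, ∀ x : Fin d → ℝ,
      ptil s x ≤ C * (T - s) ^ (-(d : ℝ) / 2) *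
        Real.exp (-Λ * ((v - x) ⬝ᵥ (v - x)) / (T - s)) := by
  classical
  haveI : Nonempty (Fin d) := ⟨⟨0, hd⟩⟩
  have h0mem : (0:ℝ) ∈ Set.Icc (0:ℝ) T := ⟨le_refl _, hT.le⟩
  -- bounds on the coefficients
  obtain ⟨cB, hcB⟩ := IsCompact.exists_bound_of_continuousOn isCompact_Icc hB.continuousOn
  have hcB0 : 0 ≤ cB := le_trans (norm_nonneg _) (hcB 0 h0mem)
  have hBent : ∀ t ∈ Set.Icc (0:ℝ) T, ∀ i j, |Btil t i j| ≤ cB := by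
    intro t ht i j
    have h := Matrix.norm_entry_le_entrywise_sup_norm (Btil t) (i := i) (j := j)
    rw [Real.norm_eq_abs] at h
    exact h.trans (hcB t ht)
  obtain ⟨cσ, hcσ⟩ := IsCompact.exists_bound_of_continuousOn isCompact_Icc hσ.continuousOn
  have hcσ0 : 0 ≤ cσ := le_trans (norm_nonneg _) (hcσ 0 h0mem)
  have hσent : ∀ t ∈ Set.Icc (0:ℝ) T, ∀ i j, |σtil t i j| ≤ cσ := by
    intro t ht i j
    have h := Matrix.norm_entry_le_entrywise_sup_norm (σtil t) (i := i) (j := j)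
    rw [Real.norm_eq_abs] at h
    exact h.trans (hcσ t ht)
  obtain ⟨cβ, hcβ⟩ := IsCompact.exists_bound_of_continuousOn isCompact_Icc hβ.continuousOn
  have hcβ0 : 0 ≤ cβ := le_trans (norm_nonneg _) (hcβ 0 h0mem)
  have hβent : ∀ t ∈ Set.Icc (0:ℝ) T, ∀ j, |βtil t j| ≤ cβ := by
    intro t ht j
    have h := norm_le_pi_norm (βtil t) j
    rw [Real.norm_eq_abs] at h
    exact h.trans (hcβ t ht)
  set κ := 2 * (d:ℝ) * cB with hκdef
  have hκ0 : 0 ≤ κ := by positivity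
  set c₀ := Real.exp (-(κ * T)) with hc₀def
  set c₁ := Real.exp (κ * T) with hc₁def
  have hc₀pos : 0 < c₀ := Real.exp_pos _
  have hc₁pos : 0 < c₁ := Real.exp_pos _
  set cΦ := Real.sqrt c₁ with hcΦdef
  have hcΦ0 : 0 ≤ cΦ := Real.sqrt_nonneg _
  have hcΦsq : cΦ^2 = c₁ := Real.sq_sqrt hc₁pos.le
  -- flow bounds for the fundamental matrix
  have hflow : ∀ s0 ∈ Set.Icc (0:ℝ) T, ∀ r ∈ Set.Icc s0 T, ∀ y : Fin d → ℝ,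
      c₀ * (y ⬝ᵥ y) ≤ (Φ r s0 *ᵥ y) ⬝ᵥ (Φ r s0 *ᵥ y) ∧
      (Φ r s0 *ᵥ y) ⬝ᵥ (Φ r s0 *ᵥ y) ≤ c₁ * (y ⬝ᵥ y) := by
    intro s0 hs0 r hr y
    have hq : ∀ t ∈ Set.Icc s0 T, ∀ z : Fin d → ℝ,
        |z ⬝ᵥ (Btil t *ᵥ z)| ≤ (κ/2) * (z ⬝ᵥ z) := by
      intro t ht z
      have ht' : t ∈ Set.Icc (0:ℝ) T := ⟨le_trans hs0.1 ht.1, ht.2⟩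
      have h := abs_quad_le (Btil t) hcB0 (hBent t ht') z
      calc |z ⬝ᵥ (Btil t *ᵥ z)| ≤ (d:ℝ) * cB * (z ⬝ᵥ z) := h
        _ = (κ/2) * (z ⬝ᵥ z) := by rw [hκdef]; ring
    have hfb := flow_bound Btil (fun r => Φ r s0) (fun t => hΦderiv t s0) hκ0 hs0.1 hs0.2 hq y r hr
    rwa [hΦid s0, Matrix.one_mulVec] at hfb
  have hent : ∀ s0 ∈ Set.Icc (0:ℝ) T, ∀ r ∈ Set.Icc s0 T, ∀ i j, |Φ r s0 i j| ≤ cΦ := by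
    intro s0 hs0 r hr i j
    exact entry_le_of_quad (fun y => (hflow s0 hs0 r hr y).2) i j
  have hPunit : ∀ τ ∈ Set.Icc (0:ℝ) T, IsUnit (Φ T τ).det := by
    intro τ hτ
    rw [← Matrix.isUnit_iff_isUnit_det, ← Matrix.mulVec_injective_iff_isUnit]
    intro a b hab
    have h1 := (hflow τ hτ T ⟨hτ.2, le_refl T⟩ (a - b)).1
    have hab' : Φ T τ *ᵥ (a - b) = 0 := by
      rw [Matrix.mulVec_sub]
      show Φ T τ *ᵥ a - Φ T τ *ᵥ b = 0
      rw [show Φ T τ *ᵥ a = Φ T τ *ᵥ b from hab, sub_self]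
    rw [hab'] at h1
    have h2 : (a - b) ⬝ᵥ (a - b) ≤ 0 := by
      have h0 : (0 : Fin d → ℝ) ⬝ᵥ (0 : Fin d → ℝ) = 0 := dotProduct_zero 0
      rw [h0] at h1
      have := le_of_mul_le_mul_left (by simpa using h1 : c₀ * ((a - b) ⬝ᵥ (a - b)) ≤ c₀ * 0) hc₀pos
      linarith
    have h3 : (a - b) ⬝ᵥ (a - b) = 0 := le_antisymm h2 (dot_nonneg _)
    exact sub_eq_zero.mp (dotProduct_self_eq_zero.mp h3)
  have hPTlow : ∀ τ ∈ Set.Icc (0:ℝ) T, ∀ y : Fin d → ℝ,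
      c₀ * (y ⬝ᵥ y) ≤ ((Φ T τ)ᵀ *ᵥ y) ⬝ᵥ ((Φ T τ)ᵀ *ᵥ y) := by
    intro τ hτ y
    have hPu : IsUnit (Φ T τ).det := hPunit τ hτ
    set u := (Φ T τ)⁻¹ *ᵥ y with hudef
    have hPy : Φ T τ *ᵥ u = y := by
      rw [hudef, Matrix.mulVec_mulVec, Matrix.mul_nonsing_inv _ hPu, Matrix.one_mulVec]
    have huu : c₀ * (u ⬝ᵥ u) ≤ y ⬝ᵥ y := by
      have h := (hflow τ hτ T ⟨hτ.2, le_refl T⟩ u).1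
      rwa [hPy] at h
    have hdot : y ⬝ᵥ y = ((Φ T τ)ᵀ *ᵥ y) ⬝ᵥ u := by
      have h : y ⬝ᵥ y = y ⬝ᵥ (Φ T τ *ᵥ u) := by rw [hPy]
      rw [h, Matrix.dotProduct_mulVec, ← Matrix.mulVec_transpose]
    have hcs := dot_sq_le ((Φ T τ)ᵀ *ᵥ y) u
    rw [← hdot] at hcs
    have hQ0 : 0 ≤ ((Φ T τ)ᵀ *ᵥ y) ⬝ᵥ ((Φ T τ)ᵀ *ᵥ y) := dot_nonneg _
    rcases eq_or_lt_of_le (dot_nonneg y) with h0 | h0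
    · rw [← h0, mul_zero]; exact hQ0
    · have hstep : (c₀ * (y ⬝ᵥ y)) * (y ⬝ᵥ y)
          ≤ (((Φ T τ)ᵀ *ᵥ y) ⬝ᵥ ((Φ T τ)ᵀ *ᵥ y)) * (y ⬝ᵥ y) := by
        calc (c₀ * (y ⬝ᵥ y)) * (y ⬝ᵥ y) = c₀ * (y ⬝ᵥ y)^2 := by ring
          _ ≤ c₀ * ((((Φ T τ)ᵀ *ᵥ y) ⬝ᵥ ((Φ T τ)ᵀ *ᵥ y)) * (u ⬝ᵥ u)) :=
              mul_le_mul_of_nonneg_left hcs hc₀pos.le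
          _ = (((Φ T τ)ᵀ *ᵥ y) ⬝ᵥ ((Φ T τ)ᵀ *ᵥ y)) * (c₀ * (u ⬝ᵥ u)) := by ring
          _ ≤ (((Φ T τ)ᵀ *ᵥ y) ⬝ᵥ ((Φ T τ)ᵀ *ᵥ y)) * (y ⬝ᵥ y) :=
              mul_le_mul_of_nonneg_left huu hQ0
      exact le_of_mul_le_mul_right hstep h0
  set Ca := (d:ℝ)^2 * cσ^2 with hCadef
  have haup : ∀ τ ∈ Set.Icc (0:ℝ) T, ∀ z : Fin d → ℝ,
      z ⬝ᵥ (atil τ *ᵥ z) ≤ Ca * (z ⬝ᵥ z) := by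
    intro τ hτ z
    rw [hatil τ, ← Matrix.mulVec_mulVec, Matrix.dotProduct_mulVec, ← Matrix.mulVec_transpose]
    exact mulVec_dot_le (σtil τ)ᵀ hcσ0
      (fun i j => by rw [Matrix.transpose_apply]; exact hσent τ hτ j i) z
  -- constants
  set m₁ := η * c₀ with hm₁def
  have hm₁pos : 0 < m₁ := mul_pos hη hc₀pos
  set M₁ := Ca * ((d:ℝ)^2 * c₁) + 1 with hM₁def
  have hM₁pos : 0 < M₁ := by positivity
  set cL := (d:ℝ) * cB * cΦ with hcLdef
  have hcL0 : 0 ≤ cL := by positivity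
  set cb := (d:ℝ) * cΦ * cβ with hcbdef
  have hcb0 : 0 ≤ cb := by positivity
  have hvv : 0 ≤ v ⬝ᵥ v := dot_nonneg v
  set D₁ := 2 * ((d:ℝ)^2 * cL^2 * (v ⬝ᵥ v)) + 2 * ((d:ℝ) * cb^2) with hD₁def
  have hD₁0 : 0 ≤ D₁ := by positivity
  set Λ := c₀ / (4 * M₁) with hΛdef
  have hΛpos : 0 < Λ := by positivity
  set E := D₁ * T / M₁ with hEdef
  have hE0 : 0 ≤ E := div_nonneg (mul_nonneg hD₁0 hT.le) hM₁pos.le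
  set C := (2 * π) ^ (-(d:ℝ)/2) * m₁ ^ (-(d:ℝ)/2) * Real.exp (E/2) with hCdef
  have hCpos : 0 < C := by
    refine mul_pos (mul_pos ?_ ?_) (Real.exp_pos _)
    · exact Real.rpow_pos_of_pos (by positivity) _
    · exact Real.rpow_pos_of_pos hm₁pos _
  refine ⟨C, hCpos, Λ, hΛpos, ?_⟩
  intro s hs x
  have hs0 : 0 ≤ s := hs.1
  have hsT : s < T := hs.2
  have ht : 0 < T - s := sub_pos.mpr hsT
  have hsmem : s ∈ Set.Icc (0:ℝ) T := ⟨hs0, hsT.le⟩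
  by_cases hint : @IntervalIntegrable _ _ NormedAddGroup.toENormedAddMonoid (fun τ => Φ T τ * atil τ * (Φ T τ)ᵀ)
      MeasureTheory.volume s T
  case neg =>
    have hK0 : K s = 0 := by rw [hK s]; exact intervalIntegral.integral_undef hint
    rw [hptil s x, hK0]
    have hdet0 : (0 : Matrix (Fin d) (Fin d) ℝ).det = 0 := Matrix.det_zero
    rw [hdet0, Real.zero_rpow (by norm_num : (-(1:ℝ)/2) ≠ 0), mul_zero, zero_mul]
    have hpos : 0 < C * (T - s) ^ (-(d:ℝ)/2) *
        Real.exp (-Λ * ((v - x) ⬝ᵥ (v - x)) / (T - s)) :=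
      mul_pos (mul_pos hCpos (Real.rpow_pos_of_pos ht _)) (Real.exp_pos _)
    exact hpos.le
  case pos =>
  -- symmetry of K s
  have haT : ∀ τ, (atil τ)ᵀ = atil τ := fun τ => by
    rw [hatil τ, Matrix.transpose_mul, Matrix.transpose_transpose]
  have hKsym : (K s)ᵀ = K s := by
    rw [hK s, transpose_integral hint]
    apply intervalIntegral.integral_congr
    intro τ _
    show (Φ T τ * atil τ * (Φ T τ)ᵀ)ᵀ = Φ T τ * atil τ * (Φ T τ)ᵀ
    rw [Matrix.transpose_mul, Matrix.transpose_transpose, Matrix.transpose_mul, haT τ,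
      Matrix.mul_assoc]
  -- quadratic form bounds on K s
  have hFpt : ∀ (τ : ℝ) (y : Fin d → ℝ), y ⬝ᵥ ((Φ T τ * atil τ * (Φ T τ)ᵀ) *ᵥ y)
      = ((Φ T τ)ᵀ *ᵥ y) ⬝ᵥ (atil τ *ᵥ ((Φ T τ)ᵀ *ᵥ y)) := by
    intro τ y
    rw [← Matrix.mulVec_mulVec, ← Matrix.mulVec_mulVec, Matrix.dotProduct_mulVec,
      ← Matrix.mulVec_transpose]
  have hKlow : ∀ y : Fin d → ℝ, (m₁ * (T - s)) * (y ⬝ᵥ y) ≤ y ⬝ᵥ (K s *ᵥ y) := by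
    intro y
    rw [hK s, quad_integral hint y]
    have hconst : (m₁ * (T - s)) * (y ⬝ᵥ y) = ∫ _τ in s..T, m₁ * (y ⬝ᵥ y) := by
      rw [intervalIntegral.integral_const]; simp [smul_eq_mul]; ring
    rw [hconst]
    refine intervalIntegral.integral_mono_on hsT.le intervalIntegrable_const
      (by exact intervalIntegrable_clm_comp (quadCLM y) hint) ?_
    intro τ hτ
    have hτ' : τ ∈ Set.Icc (0:ℝ) T := ⟨le_trans hs0 hτ.1, hτ.2⟩
    rw [hFpt τ y]
    have h1 := hell τ hτ' ((Φ T τ)ᵀ *ᵥ y)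
    have h2 := hPTlow τ hτ' y
    calc m₁ * (y ⬝ᵥ y) = η * (c₀ * (y ⬝ᵥ y)) := by rw [hm₁def]; ring
      _ ≤ η * (((Φ T τ)ᵀ *ᵥ y) ⬝ᵥ ((Φ T τ)ᵀ *ᵥ y)) := mul_le_mul_of_nonneg_left h2 hη.le
      _ ≤ _ := h1
  have hKup : ∀ y : Fin d → ℝ, y ⬝ᵥ (K s *ᵥ y) ≤ (M₁ * (T - s)) * (y ⬝ᵥ y) := by
    intro y
    rw [hK s, quad_integral hint y]
    have hconst : (M₁ * (T - s)) * (y ⬝ᵥ y) = ∫ _τ in s..T, M₁ * (y ⬝ᵥ y) := by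
      rw [intervalIntegral.integral_const]; simp [smul_eq_mul]; ring
    rw [hconst]
    refine intervalIntegral.integral_mono_on hsT.le
      (by exact intervalIntegrable_clm_comp (quadCLM y) hint) intervalIntegrable_const ?_
    intro τ hτ
    have hτ' : τ ∈ Set.Icc (0:ℝ) T := ⟨le_trans hs0 hτ.1, hτ.2⟩
    rw [hFpt τ y]
    have h1 := haup τ hτ' ((Φ T τ)ᵀ *ᵥ y)
    have h2 : ((Φ T τ)ᵀ *ᵥ y) ⬝ᵥ ((Φ T τ)ᵀ *ᵥ y) ≤ ((d:ℝ)^2 * cΦ^2) * (y ⬝ᵥ y) :=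
      mulVec_dot_le (Φ T τ)ᵀ hcΦ0
        (fun i j => by rw [Matrix.transpose_apply]; exact hent τ hτ' T ⟨hτ'.2, le_refl T⟩ j i) y
    have hCa0 : 0 ≤ Ca := by rw [hCadef]; positivity
    calc ((Φ T τ)ᵀ *ᵥ y) ⬝ᵥ (atil τ *ᵥ ((Φ T τ)ᵀ *ᵥ y))
        ≤ Ca * (((Φ T τ)ᵀ *ᵥ y) ⬝ᵥ ((Φ T τ)ᵀ *ᵥ y)) := h1
      _ ≤ Ca * (((d:ℝ)^2 * cΦ^2) * (y ⬝ᵥ y)) := mul_le_mul_of_nonneg_left h2 hCa0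
      _ ≤ M₁ * (y ⬝ᵥ y) := by
          rw [hcΦsq, hM₁def]
          linarith [dot_nonneg y]
  have hdetge : (m₁ * (T - s))^d ≤ (K s).det :=
    det_ge_of_quad hKsym (by positivity) hKlow
  have hdetpos : 0 < (K s).det := lt_of_lt_of_le (pow_pos (by positivity) d) hdetge
  have hKdetunit : IsUnit (K s).det := isUnit_iff_ne_zero.mpr hdetpos.ne'
  have hqlow := inv_quad_ge hKsym (mul_pos hm₁pos ht) (mul_pos hM₁pos ht) hKdetunit
    hKlow hKup (v - μ s x)
  -- bound on the drift integral b
  set b := ∫ τ in s..T, Φ T τ *ᵥ βtil τ with hbdef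
  have hbnorm : ‖b‖ ≤ cb * (T - s) := by
    have h1 : ∀ τ ∈ Set.uIoc s T, ‖Φ T τ *ᵥ βtil τ‖ ≤ cb := by
      intro τ hτm
      have hτ' : τ ∈ Set.Icc (0:ℝ) T := by
        rw [Set.uIoc_of_le hsT.le] at hτm
        exact ⟨le_trans hs0 hτm.1.le, hτm.2⟩
      rw [pi_norm_le_iff_of_nonneg hcb0]
      intro i
      rw [Real.norm_eq_abs]
      show |∑ j, Φ T τ i j * βtil τ j| ≤ cb
      calc |∑ j, Φ T τ i j * βtil τ j| ≤ ∑ j, |Φ T τ i j * βtil τ j| :=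
            Finset.abs_sum_le_sum_abs _ _
        _ ≤ ∑ _j : Fin d, cΦ * cβ := Finset.sum_le_sum fun j _ => by
            rw [abs_mul]
            exact mul_le_mul (hent τ hτ' T ⟨hτ'.2, le_refl T⟩ i j) (hβent τ hτ' j)
              (abs_nonneg _) hcΦ0
        _ = (d:ℝ) * (cΦ * cβ) := by simp [Finset.sum_const, Fintype.card_fin]
        _ = cb := by rw [hcbdef]; ring
    have h2 := intervalIntegral.norm_integral_le_of_norm_le_const h1
    rw [← hbdef] at h2
    calc ‖b‖ ≤ cb * |T - s| := h2
      _ = cb * (T - s) := by rw [abs_of_pos ht]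
  have hbdot : b ⬝ᵥ b ≤ (d:ℝ) * (cb * (T-s))^2 := by
    calc b ⬝ᵥ b = ∑ i, b i * b i := rfl
      _ ≤ ∑ _i : Fin d, (cb * (T-s))^2 := Finset.sum_le_sum fun i _ => by
          have h1 : |b i| ≤ cb * (T-s) := by
            have h := norm_le_pi_norm b i
            rw [Real.norm_eq_abs] at h
            exact h.trans hbnorm
          calc b i * b i = |b i| * |b i| := (abs_mul_abs_self _).symm
            _ ≤ (cb*(T-s)) * (cb*(T-s)) :=
                mul_le_mul h1 h1 (abs_nonneg _) (mul_nonneg hcb0 ht.le)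
            _ = (cb*(T-s))^2 := (sq _).symm
      _ = (d:ℝ) * (cb * (T-s))^2 := by simp [Finset.sum_const, Fintype.card_fin]
  -- bound on Φ T s - 1
  have hFTC : (∫ r in s..T, Btil r * Φ r s) = Φ T s - Φ s s := by
    apply intervalIntegral.integral_eq_sub_of_hasDerivAt
    · intro r _; exact hΦderiv r s
    · apply ContinuousOn.intervalIntegrable
      have hc1 : ContinuousOn Btil (Set.uIcc s T) := by
        apply hB.continuousOn.mono
        rw [Set.uIcc_of_le hsT.le]
        exact Set.Icc_subset_Icc hs0 le_rfl
      have hc2 : ContinuousOn (fun r => Φ r s) (Set.uIcc s T) :=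
        Continuous.continuousOn (continuous_iff_continuousAt.mpr fun r =>
          (hΦderiv r s).differentiableAt.continuousAt)
      exact (continuous_fst.matrix_mul continuous_snd).comp_continuousOn (hc1.prodMk hc2)
  have hPm1 : ∀ i j, |(1 - Φ T s) i j| ≤ cL * (T - s) := by
    have hnorm : ‖Φ T s - 1‖ ≤ cL * (T - s) := by
      rw [← hΦid s, ← hFTC]
      have h1 : ∀ r ∈ Set.uIoc s T, ‖Btil r * Φ r s‖ ≤ cL := by
        intro r hrm
        have hr1 : r ∈ Set.Icc s T := by
          rw [Set.uIoc_of_le hsT.le] at hrm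
          exact ⟨hrm.1.le, hrm.2⟩
        have hr' : r ∈ Set.Icc (0:ℝ) T := ⟨le_trans hs0 hr1.1, hr1.2⟩
        rw [Matrix.norm_le_iff hcL0]
        intro i j
        rw [Real.norm_eq_abs]
        show |∑ k, Btil r i k * Φ r s k j| ≤ cL
        calc |∑ k, Btil r i k * Φ r s k j| ≤ ∑ k, |Btil r i k * Φ r s k j| :=
              Finset.abs_sum_le_sum_abs _ _
          _ ≤ ∑ _k : Fin d, cB * cΦ := Finset.sum_le_sum fun k _ => by
              rw [abs_mul]
              exact mul_le_mul (hBent r hr' i k) (hent s hsmem r hr1 k j) (abs_nonneg _) hcB0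
          _ = (d:ℝ) * (cB * cΦ) := by simp [Finset.sum_const, Fintype.card_fin]
          _ = cL := by rw [hcLdef]; ring
      have h2 := intervalIntegral.norm_integral_le_of_norm_le_const h1
      calc ‖∫ r in s..T, Btil r * Φ r s‖ ≤ cL * |T - s| := h2
        _ = cL * (T - s) := by rw [abs_of_pos ht]
    intro i j
    have h2 : (1 - Φ T s) i j = -((Φ T s - 1) i j) := by
      simp [Matrix.sub_apply]
    rw [h2, abs_neg]
    have h3 := Matrix.norm_entry_le_entrywise_sup_norm (Φ T s - 1) (i := i) (j := j)
    rw [Real.norm_eq_abs] at h3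
    exact h3.trans hnorm
  -- the key lower bound for (v - μ s x) ⬝ᵥ (v - μ s x)
  have hPu : IsUnit (Φ T s).det := hPunit s hsmem
  set ρ := (1 - Φ T s) *ᵥ v - b with hρdef
  have hρdot : ρ ⬝ᵥ ρ ≤ D₁ * (T - s)^2 := by
    have h1 := dot_sub_le_stmt7 ((1 - Φ T s) *ᵥ v) b
    have h2 : ((1 - Φ T s) *ᵥ v) ⬝ᵥ ((1 - Φ T s) *ᵥ v)
        ≤ ((d:ℝ)^2 * (cL*(T-s))^2) * (v ⬝ᵥ v) :=
      mulVec_dot_le (1 - Φ T s) (by positivity) hPm1 v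
    calc ρ ⬝ᵥ ρ ≤ 2 * (((1 - Φ T s) *ᵥ v) ⬝ᵥ ((1 - Φ T s) *ᵥ v)) + 2 * (b ⬝ᵥ b) := h1
      _ ≤ 2 * (((d:ℝ)^2 * (cL*(T-s))^2) * (v ⬝ᵥ v)) + 2 * ((d:ℝ) * (cb * (T-s))^2) := by
          linarith
      _ = D₁ * (T-s)^2 := by rw [hD₁def]; ring
  set δ := (Φ T s)⁻¹ *ᵥ ρ with hδdef
  have hPδ : Φ T s *ᵥ δ = ρ := by
    rw [hδdef, Matrix.mulVec_mulVec, Matrix.mul_nonsing_inv _ hPu, Matrix.one_mulVec]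
  have hδdot : c₀ * (δ ⬝ᵥ δ) ≤ D₁ * (T - s)^2 := by
    have h := (hflow s hsmem T ⟨hsT.le, le_refl T⟩ δ).1
    rw [hPδ] at h
    exact h.trans hρdot
  have hedot : (c₀/2) * ((v - x) ⬝ᵥ (v - x)) - D₁ * (T-s)^2
      ≤ (v - μ s x) ⬝ᵥ (v - μ s x) := by
    have he : v - μ s x = Φ T s *ᵥ ((v - x) + δ) := by
      have h1 : Φ T s *ᵥ ((v - x) + δ) = Φ T s *ᵥ v - Φ T s *ᵥ x + ((1 - Φ T s) *ᵥ v - b) := by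
        rw [Matrix.mulVec_add, Matrix.mulVec_sub, hPδ, hρdef]
      rw [hμ s x, ← hbdef, h1, Matrix.sub_mulVec, Matrix.one_mulVec]
      abel
    rw [he]
    have h1 := (hflow s hsmem T ⟨hsT.le, le_refl T⟩ ((v - x) + δ)).1
    have h2 := dot_add_ge_stmt7 (v - x) δ
    have hint2 := mul_le_mul_of_nonneg_left h2 hc₀pos.le
    have e2 : c₀ * (δ ⬝ᵥ δ) - D₁*(T-s)^2 ≤ 0 := sub_nonpos.mpr hδdot
    have e1 : (c₀/2) * ((v - x) ⬝ᵥ (v - x)) - D₁ * (T-s)^2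
        = c₀ * (1/2 * ((v - x) ⬝ᵥ (v - x)) - δ ⬝ᵥ δ) + (c₀ * (δ ⬝ᵥ δ) - D₁*(T-s)^2) := by
      ring
    rw [e1]
    calc c₀ * (1/2 * ((v - x) ⬝ᵥ (v - x)) - δ ⬝ᵥ δ) + (c₀ * (δ ⬝ᵥ δ) - D₁*(T-s)^2)
        ≤ c₀ * (((v - x) + δ) ⬝ᵥ ((v - x) + δ)) + 0 := add_le_add hint2 e2
      _ = c₀ * (((v - x) + δ) ⬝ᵥ ((v - x) + δ)) := add_zero _
      _ ≤ _ := h1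
  -- final assembly
  rw [hptil s x]
  have hW0 : 0 ≤ (v - x) ⬝ᵥ (v - x) := dot_nonneg _
  have hMt : 0 < M₁ * (T - s) := mul_pos hM₁pos ht
  have hq1 : ((c₀/2) * ((v - x) ⬝ᵥ (v - x)) - D₁*(T-s)^2) / (M₁ * (T-s))
      ≤ (v - μ s x) ⬝ᵥ ((K s)⁻¹ *ᵥ (v - μ s x)) := by
    refine le_trans ?_ hqlow
    exact div_le_div_of_nonneg_right hedot hMt.le
  have hq2 : 2*Λ*((v - x) ⬝ᵥ (v - x))/(T-s) - E
      ≤ (v - μ s x) ⬝ᵥ ((K s)⁻¹ *ᵥ (v - μ s x)) := by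
    refine le_trans ?_ hq1
    have hfs : ((c₀/2) * ((v - x) ⬝ᵥ (v - x)) - D₁*(T-s)^2) / (M₁ * (T-s))
        = (c₀/(2*M₁)) * (((v - x) ⬝ᵥ (v - x))/(T-s)) - (D₁/M₁)*(T-s) := by
      field_simp
    rw [hfs]
    have h3 : (D₁/M₁)*(T-s) ≤ E := by
      rw [hEdef, div_mul_eq_mul_div]
      exact div_le_div_of_nonneg_right
        (mul_le_mul_of_nonneg_left (by linarith : T - s ≤ T) hD₁0) hM₁pos.le
    have h4 : 2*Λ*((v - x) ⬝ᵥ (v - x))/(T-s) = (c₀/(2*M₁)) * (((v - x) ⬝ᵥ (v - x))/(T-s)) := by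
      rw [hΛdef]
      field_simp
      ring
    rw [h4]
    linarith
  have hexp : Real.exp (-(1/2) * ((v - μ s x) ⬝ᵥ ((K s)⁻¹ *ᵥ (v - μ s x))))
      ≤ Real.exp (E/2) * Real.exp (-Λ * ((v - x) ⬝ᵥ (v - x)) / (T-s)) := by
    rw [← Real.exp_add]
    apply Real.exp_le_exp.mpr
    have h5 : -(1/2) * ((v - μ s x) ⬝ᵥ ((K s)⁻¹ *ᵥ (v - μ s x)))
        ≤ -(1/2) * (2*Λ*((v - x) ⬝ᵥ (v - x))/(T-s) - E) := by
      have := mul_le_mul_of_nonpos_left hq2 (by norm_num : (-(1:ℝ)/2) ≤ 0)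
      linarith [this]
    have h6 : -(1/2) * (2*Λ*((v - x) ⬝ᵥ (v - x))/(T-s) - E)
        = E/2 + (-Λ * ((v - x) ⬝ᵥ (v - x)) / (T-s)) := by
      field_simp
      ring
    linarith [h5, h6.le, h6.ge]
  have hdetb : (K s).det ^ (-(1:ℝ)/2) ≤ m₁ ^ (-(d:ℝ)/2) * (T-s) ^ (-(d:ℝ)/2) := by
    have h1 : ((m₁*(T-s))^d : ℝ) ^ (-(1:ℝ)/2) = m₁ ^ (-(d:ℝ)/2) * (T-s) ^ (-(d:ℝ)/2) := by
      rw [← Real.rpow_natCast (m₁*(T-s)) d, ← Real.rpow_mul (by positivity)]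
      have he : (d:ℝ) * (-(1:ℝ)/2) = -(d:ℝ)/2 := by ring
      rw [he, Real.mul_rpow hm₁pos.le ht.le]
    calc (K s).det ^ (-(1:ℝ)/2) ≤ ((m₁*(T-s))^d : ℝ) ^ (-(1:ℝ)/2) :=
        Real.rpow_le_rpow_of_nonpos (pow_pos (by positivity) d) hdetge (by norm_num)
      _ = m₁ ^ (-(d:ℝ)/2) * (T-s) ^ (-(d:ℝ)/2) := h1
  have hA1 : (0:ℝ) < (2 * π) ^ (-(d:ℝ)/2) := Real.rpow_pos_of_pos (by positivity) _
  calc (2*π)^(-(d:ℝ)/2) * (K s).det ^ (-(1:ℝ)/2)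
        * Real.exp (-(1/2) * ((v - μ s x) ⬝ᵥ ((K s)⁻¹ *ᵥ (v - μ s x))))
      ≤ (2*π)^(-(d:ℝ)/2) * (m₁ ^ (-(d:ℝ)/2) * (T-s) ^ (-(d:ℝ)/2))
        * (Real.exp (E/2) * Real.exp (-Λ * ((v - x) ⬝ᵥ (v - x)) / (T-s))) := by
        apply mul_le_mul
        · exact mul_le_mul_of_nonneg_left hdetb hA1.le
        · exact hexp
        · exact Real.exp_nonneg _
        · positivity
    _ = C * (T-s)^(-(d:ℝ)/2) * Real.exp (-Λ * ((v - x) ⬝ᵥ (v - x)) / (T-s)) := by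
        rw [hCdef]; ring
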